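/- Equivalence of fully specified goals implies equivalence of original goals: if f : L¹ → L² is a bijection with s₀² = f[s₀¹] and action correspondence, and the fully specified goals satisfy g²* = f[g¹*] (where g* is g augmented with all propositions true in every reachable goal state of g), then the reachable goal-state sets of the original goals correspond: {s reachable in P² : g² ⊆ s} = {f[s] : s reachable in P¹, g¹ ⊆ s}. -/

import Mathlib

structure PAction (L : Type*) where
  pre : Set L
  add : Set L
  del : Set L

/-- The transition function γ(s, a) = (s \ del(a)) ∪ add(a). -/
def applyAction {L : Type*} (s : Set L) (a : PAction L) : Set L := (s \ a.del) ∪ a.add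

/-- Reachability by finite applicable action sequences. -/
inductive Reachable {L : Type*} (A : Set (PAction L)) (s0 : Set L) : Set L → Prop
  | refl : Reachable A s0 s0
  | step {s : Set L} {a : PAction L} : Reachable A s0 s → a ∈ A → a.pre ⊆ s →
      Reachable A s0 (applyAction s a)

/-- The full specification of a goal: `g` plus every proposition that is true in every
reachable state containing `g`. -/
def fullSpec {L : Type*} (A : Set (PAction L)) (s0 g : Set L) : Set L :=
  g ∪ {t : L | ∀ s : Set L, Reachable A s0 s → g ⊆ s → t ∈ s}

def mapAction {L1 L2 : Type*} (f : L1 → L2) (a : PAction L1) : PAction L2 :=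
  ⟨f '' a.pre, f '' a.add, f '' a.del⟩

/-- Equivalence of fully specified goals implies correspondence of the reachable
goal-state sets of the original goals. -/
theorem fullSpec_equiv_implies_goalStates_correspond {L1 L2 : Type*} (f : L1 ≃ L2)
    (A1 : Set (PAction L1)) (A2 : Set (PAction L2))
    (s01 : Set L1) (s02 : Set L2) (g1 : Set L1) (g2 : Set L2)
    (hact : A2 = (mapAction ⇑f) '' A1)
    (hinit : s02 = ⇑f '' s01)
    (hfull : fullSpec A2 s02 g2 = ⇑f '' fullSpec A1 s01 g1) :
    {s : Set L2 | Reachable A2 s02 s ∧ g2 ⊆ s} =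
      (fun s : Set L1 => ⇑f '' s) '' {s : Set L1 | Reachable A1 s01 s ∧ g1 ⊆ s} := by
  have hinj : Function.Injective ⇑f := f.injective
  have happ : ∀ (t : Set L1) (a : PAction L1),
      ⇑f '' applyAction t a = applyAction (⇑f '' t) (mapAction ⇑f a) := by
    intro t a
    simp [applyAction, mapAction, Set.image_union, Set.image_diff hinj]
  -- forward: reachable in P2 are exactly images of reachable in P1
  have hreach2 : ∀ s : Set L2, Reachable A2 s02 s →
      ∃ t : Set L1, Reachable A1 s01 t ∧ s = ⇑f '' t := by
    intro s hs
    induction hs with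
    | refl => exact ⟨s01, Reachable.refl, hinit⟩
    | step hr ha hpre ih =>
      obtain ⟨t, ht, rfl⟩ := ih
      rw [hact] at ha
      obtain ⟨a1, ha1, rfl⟩ := ha
      refine ⟨applyAction t a1, Reachable.step ht ha1 ?_, (happ t a1).symm⟩
      intro x hx
      have : f x ∈ (mapAction ⇑f a1).pre := ⟨x, hx, rfl⟩
      obtain ⟨y, hy, hyx⟩ := hpre this
      rwa [← hinj hyx]
  have hreach1 : ∀ t : Set L1, Reachable A1 s01 t → Reachable A2 s02 (⇑f '' t) := by
    intro t ht
    induction ht with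
    | refl => rw [hinit]; exact Reachable.refl
    | step hr ha hpre ih =>
      rename_i s a
      rw [happ]
      refine Reachable.step ih (hact ▸ ⟨a, ha, rfl⟩) ?_
      exact Set.image_mono hpre
  have hfs1 : g1 ⊆ fullSpec A1 s01 g1 := Set.subset_union_left
  have hfs2 : g2 ⊆ fullSpec A2 s02 g2 := Set.subset_union_left
  have hfssub : ∀ (s : Set L2), Reachable A2 s02 s → g2 ⊆ s → fullSpec A2 s02 g2 ⊆ s := by
    intro s hr hg x hx
    rcases hx with hx | hx
    · exact hg hx
    · exact hx s hr hg
  have hfssub1 : ∀ (t : Set L1), Reachable A1 s01 t → g1 ⊆ t → fullSpec A1 s01 g1 ⊆ t := by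
    intro t hr hg x hx
    rcases hx with hx | hx
    · exact hg hx
    · exact hx t hr hg
  ext s
  constructor
  · rintro ⟨hr, hg⟩
    obtain ⟨t, ht, rfl⟩ := hreach2 s hr
    refine ⟨t, ⟨ht, ?_⟩, rfl⟩
    have h1 : fullSpec A2 s02 g2 ⊆ ⇑f '' t := hfssub _ hr hg
    rw [hfull] at h1
    have h2 : fullSpec A1 s01 g1 ⊆ t := fun x hx => by
      obtain ⟨y, hy, hyx⟩ := h1 ⟨x, hx, rfl⟩
      rwa [← hinj hyx]
    exact hfs1.trans h2
  · rintro ⟨t, ⟨ht, hg⟩, rfl⟩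
    refine ⟨hreach1 t ht, ?_⟩
    have h1 : ⇑f '' fullSpec A1 s01 g1 ⊆ ⇑f '' t :=
      Set.image_mono (hfssub1 t ht hg)
    rw [← hfull] at h1
    exact hfs2.trans h1
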